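/- Let P(λ) = Σ_{i=0}^k P_i λ^i with P_i ∈ ℝ^{n×n} be a matrix polynomial of degree k ≥ 2, let v ∈ ℝ^k, and let L(λ) be a kn × kn matrix pencil. Then L(λ)·(Λ_{k−1}(λ) ⊗ I_n) = v ⊗ P(λ) holds identically if and only if there exists a matrix Z ∈ ℝ^{kn × (k−1)n} such that L(λ) = [v ⊗ I_n, Z] · Frob_P(λ), where [v ⊗ I_n, Z] denotes the kn × kn matrix obtained by placing Z to the right of the kn × n matrix v ⊗ I_n. -/

import Mathlib

open Matrix Polynomial
open scoped Kronecker

noncomputable section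

/-- `Λ_j(λ)` as a `(j+1) × 1` matrix of real polynomials, with `i`-th entry `λ^{j-i}`. -/
def Lam (j : ℕ) : Matrix (Fin (j + 1)) (Fin 1) (Polynomial ℝ) :=
  Matrix.of fun i _ => X ^ (j - (i : ℕ))

/-- `L_κ(λ)`, the `κ × (κ+1)` pencil with `-1` on the diagonal and `λ` on the superdiagonal. -/
def Lk (κ : ℕ) : Matrix (Fin κ) (Fin (κ + 1)) (Polynomial ℝ) :=
  Matrix.of fun i j => if (j : ℕ) = (i : ℕ) then -1 else if (j : ℕ) = (i : ℕ) + 1 then X else 0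

/-- The matrix pencil `λ·A + B` as a matrix of real polynomials. -/
def pencilM {ρ γ : Type*} (A B : Matrix ρ γ ℝ) : Matrix ρ γ (Polynomial ℝ) :=
  Matrix.of fun i j => X * C (A i j) + C (B i j)

/-- The matrix polynomial `Σ_{i=0}^k Pc i · λ^i` as a matrix of real polynomials. -/
def polyOf (m n k : ℕ) (Pc : ℕ → Matrix (Fin m) (Fin n) ℝ) :
    Matrix (Fin m) (Fin n) (Polynomial ℝ) :=
  Matrix.of fun i j => ∑ t ∈ Finset.range (k + 1), X ^ t * C (Pc t i j)

/-- `Λ_{k-1}(λ) ⊗ I_n` as a flat `kn × n` matrix of polynomials. -/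
def LamI (n k : ℕ) : Matrix (Fin k × Fin n) (Fin 1 × Fin n) (Polynomial ℝ) :=
  Matrix.of fun p q => if p.2 = q.2 then X ^ (k - 1 - (p.1 : ℕ)) else 0

/-- `Λ_{k-1}(λ)ᵀ ⊗ I_n` as a flat `n × kn` matrix of polynomials. -/
def LamIT (n k : ℕ) : Matrix (Fin 1 × Fin n) (Fin k × Fin n) (Polynomial ℝ) :=
  Matrix.of fun p q => if p.2 = q.2 then X ^ (k - 1 - (q.1 : ℕ)) else 0

/-- The Frobenius companion pencil `Frob_P(λ)` of the matrix polynomial with coefficients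
`Pc` of degree `k`. -/
def FrobP (n k : ℕ) (Pc : ℕ → Matrix (Fin n) (Fin n) ℝ) :
    Matrix (Fin k × Fin n) (Fin k × Fin n) (Polynomial ℝ) :=
  Matrix.of fun p q =>
    (if (p.1 : ℕ) = 0 ∧ (q.1 : ℕ) = 0 then X * C (Pc k p.2 q.2)
     else if p.1 = q.1 ∧ p.2 = q.2 then X else 0)
    +
    (if (p.1 : ℕ) = 0 then C (Pc (k - 1 - (q.1 : ℕ)) p.2 q.2)
     else if (p.1 : ℕ) = (q.1 : ℕ) + 1 ∧ p.2 = q.2 then -1 else 0)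

/-- The constant `kn × kn` matrix `[v ⊗ I_n, Z]`. -/
def vZmat (n k : ℕ) (v : Fin k → ℝ)
    (Z : Matrix (Fin k × Fin n) (Fin (k - 1) × Fin n) ℝ) :
    Matrix (Fin k × Fin n) (Fin k × Fin n) ℝ :=
  Matrix.of fun p q =>
    if (q.1 : ℕ) = 0 then (if p.2 = q.2 then v p.1 else 0)
    else if h : (q.1 : ℕ) - 1 < k - 1 then Z p (⟨(q.1 : ℕ) - 1, h⟩, q.2) else 0

lemma sum_val_pick {M : Type*} [AddCommMonoid M] (k m : ℕ) (f : Fin k → M) :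
    (∑ q : Fin k, if (q : ℕ) = m then f q else 0) = if h : m < k then f ⟨m, h⟩ else 0 := by
  split
  · next h =>
    rw [Finset.sum_eq_single ⟨m, h⟩]
    · simp
    · intro b _ hb
      rw [if_neg]
      simpa [Fin.ext_iff] using hb
    · simp
  · next h =>
    refine Finset.sum_eq_zero fun q _ => ?_
    rw [if_neg]
    have := q.isLt; omega

lemma entryR (n k : ℕ) (hk : 2 ≤ k) (Pc : ℕ → Matrix (Fin n) (Fin n) ℝ)
    (v : Fin k → ℝ) (Z : Matrix (Fin k × Fin n) (Fin (k - 1) × Fin n) ℝ)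
    (p : Fin k × Fin n) (q1 : Fin k) (j2 : Fin n) :
    ((vZmat n k v Z).map C * FrobP n k Pc) p (q1, j2) =
      X * C (if h : (q1 : ℕ) = 0 then v p.1 * Pc k p.2 j2
             else Z p (⟨(q1 : ℕ) - 1, by have := q1.isLt; omega⟩, j2)) +
      C (v p.1 * Pc (k - 1 - (q1 : ℕ)) p.2 j2 +
         (if h : (q1 : ℕ) + 1 < k then -(Z p (⟨(q1 : ℕ), by omega⟩, j2)) else 0)) := by
  rw [Matrix.mul_apply, Fintype.sum_prod_type]
  have hk0 : 0 < k := by omega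
  have split1 : ∀ (r1 : Fin k) (r2 : Fin n),
      ((vZmat n k v Z).map C) p (r1, r2) * FrobP n k Pc (r1, r2) (q1, j2) =
      (C (vZmat n k v Z p (r1, r2)) *
        (if (r1 : ℕ) = 0 ∧ (q1 : ℕ) = 0 then X * C (Pc k r2 j2)
         else if r1 = q1 ∧ r2 = j2 then X else 0)) +
      (C (vZmat n k v Z p (r1, r2)) *
        ((if (r1 : ℕ) = 0 then C (Pc (k - 1 - (q1 : ℕ)) r2 j2) else 0) +
         (if (r1 : ℕ) = (q1 : ℕ) + 1 ∧ r2 = j2 then -1 else 0))) := by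
    intro r1 r2
    rw [Matrix.map_apply]
    rw [show (FrobP n k Pc (r1, r2) (q1, j2)) =
      (if (r1 : ℕ) = 0 ∧ (q1 : ℕ) = 0 then X * C (Pc k r2 j2)
         else if r1 = q1 ∧ r2 = j2 then X else 0) +
      ((if (r1 : ℕ) = 0 then C (Pc (k - 1 - (q1 : ℕ)) r2 j2) else 0) +
       (if (r1 : ℕ) = (q1 : ℕ) + 1 ∧ r2 = j2 then -1 else 0)) from ?_]
    · ring
    · show (_ : Polynomial ℝ) + _ = _
      dsimp only [FrobP, Matrix.of_apply]
      congr 1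
      show (if (r1 : ℕ) = 0 then C (Pc (k - 1 - (q1 : ℕ)) r2 j2) else if (r1 : ℕ) = (q1 : ℕ) + 1 ∧ r2 = j2 then -1 else 0) = _
      by_cases h : (r1 : ℕ) = 0
      · rw [if_pos h, if_pos h, if_neg (by rintro ⟨h1, -⟩; omega), add_zero]
      · rw [if_neg h, if_neg h, zero_add]
  rw [Finset.sum_congr rfl fun r1 _ => Finset.sum_congr rfl fun r2 _ => split1 r1 r2]
  rw [Finset.sum_congr rfl fun r1 _ => Finset.sum_add_distrib, Finset.sum_add_distrib]
  congr 1
  · -- the X-part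
    by_cases hq : (q1 : ℕ) = 0
    · rw [dif_pos hq]
      have inner : ∀ r1 : Fin k, (∑ r2 : Fin n, C (vZmat n k v Z p (r1, r2)) *
          (if (r1 : ℕ) = 0 ∧ (q1 : ℕ) = 0 then X * C (Pc k r2 j2)
           else if r1 = q1 ∧ r2 = j2 then X else 0)) =
          (if (r1:ℕ) = 0 then X * C (v p.1 * Pc k p.2 j2) else 0) := by
        intro r1
        by_cases h : (r1 : ℕ) = 0
        · rw [if_pos h]
          have st : ∀ r2 : Fin n, C (vZmat n k v Z p (r1, r2)) *
              (if (r1 : ℕ) = 0 ∧ (q1 : ℕ) = 0 then X * C (Pc k r2 j2)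
               else if r1 = q1 ∧ r2 = j2 then X else 0) =
              (if p.2 = r2 then X * C (v p.1 * Pc k r2 j2) else 0) := by
            intro r2
            rw [if_pos ⟨h, hq⟩]
            dsimp only [vZmat, Matrix.of_apply]
            rw [if_pos h]
            by_cases h2 : p.2 = r2
            · rw [if_pos h2, if_pos h2, C_mul]; ring
            · rw [if_neg h2, if_neg h2, map_zero, zero_mul]
          rw [Finset.sum_congr rfl fun r2 _ => st r2, Finset.sum_ite_eq]
          simp
        · rw [if_neg h]
          refine Finset.sum_eq_zero fun r2 _ => ?_
          rw [if_neg (by tauto), if_neg (by rintro ⟨rfl, -⟩; exact h hq), mul_zero]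
      rw [Finset.sum_congr rfl fun r1 _ => inner r1, sum_val_pick]
      simp [hk0]
    · rw [dif_neg hq]
      have inner : ∀ r1 : Fin k, (∑ r2 : Fin n, C (vZmat n k v Z p (r1, r2)) *
          (if (r1 : ℕ) = 0 ∧ (q1 : ℕ) = 0 then X * C (Pc k r2 j2)
           else if r1 = q1 ∧ r2 = j2 then X else 0)) =
          (if (r1:ℕ) = (q1:ℕ) then X * C (Z p (⟨(q1 : ℕ) - 1, by have := q1.isLt; omega⟩, j2)) else 0) := by
        intro r1
        by_cases h : r1 = q1
        · rw [if_pos (by rw [h])]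
          have st : ∀ r2 : Fin n, C (vZmat n k v Z p (r1, r2)) *
              (if (r1 : ℕ) = 0 ∧ (q1 : ℕ) = 0 then X * C (Pc k r2 j2)
               else if r1 = q1 ∧ r2 = j2 then X else 0) =
              (if r2 = j2 then C (vZmat n k v Z p (r1, r2)) * X else 0) := by
            intro r2
            rw [if_neg (by tauto)]
            by_cases h2 : r2 = j2
            · rw [if_pos ⟨h, h2⟩, if_pos h2]
            · rw [if_neg (by tauto), if_neg h2, mul_zero]
          rw [Finset.sum_congr rfl fun r2 _ => st r2, Finset.sum_ite_eq']
          simp only [Finset.mem_univ, if_true]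
          subst h
          dsimp only [vZmat, Matrix.of_apply]
          rw [if_neg hq, dif_pos (by have := r1.isLt; omega)]
          ring
        · rw [if_neg (fun hh => h (Fin.ext hh))]
          refine Finset.sum_eq_zero fun r2 _ => ?_
          rw [if_neg (by tauto), if_neg (by tauto), mul_zero]
      rw [Finset.sum_congr rfl fun r1 _ => inner r1, sum_val_pick]
      simp [q1.isLt]
  · -- the constant part
    have inner : ∀ r1 : Fin k, (∑ r2 : Fin n, C (vZmat n k v Z p (r1, r2)) *
        ((if (r1 : ℕ) = 0 then C (Pc (k - 1 - (q1 : ℕ)) r2 j2) else 0) +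
         (if (r1 : ℕ) = (q1 : ℕ) + 1 ∧ r2 = j2 then -1 else 0))) =
        (if (r1:ℕ) = 0 then C (v p.1 * Pc (k - 1 - (q1 : ℕ)) p.2 j2) else 0) +
        (if (r1:ℕ) = (q1:ℕ) + 1 then -C (vZmat n k v Z p (r1, j2)) else 0) := by
      intro r1
      rw [Finset.sum_congr rfl fun r2 _ => mul_add _ _ _, Finset.sum_add_distrib]
      congr 1
      · by_cases h : (r1 : ℕ) = 0
        · rw [if_pos h]
          have st : ∀ r2 : Fin n, C (vZmat n k v Z p (r1, r2)) *
              (if (r1 : ℕ) = 0 then C (Pc (k - 1 - (q1 : ℕ)) r2 j2) else 0) =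
              (if p.2 = r2 then C (v p.1 * Pc (k - 1 - (q1 : ℕ)) r2 j2) else 0) := by
            intro r2
            rw [if_pos h]
            dsimp only [vZmat, Matrix.of_apply]
            rw [if_pos h]
            by_cases h2 : p.2 = r2
            · rw [if_pos h2, if_pos h2, ← C_mul]
            · rw [if_neg h2, if_neg h2, map_zero, zero_mul]
          rw [Finset.sum_congr rfl fun r2 _ => st r2, Finset.sum_ite_eq]
          simp
        · rw [if_neg h]
          refine Finset.sum_eq_zero fun r2 _ => by rw [if_neg h, mul_zero]
      · by_cases h : (r1 : ℕ) = (q1 : ℕ) + 1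
        · rw [if_pos h]
          have st : ∀ r2 : Fin n, C (vZmat n k v Z p (r1, r2)) *
              (if (r1 : ℕ) = (q1 : ℕ) + 1 ∧ r2 = j2 then (-1 : Polynomial ℝ) else 0) =
              (if r2 = j2 then -C (vZmat n k v Z p (r1, r2)) else 0) := by
            intro r2
            by_cases h2 : r2 = j2
            · rw [if_pos ⟨h, h2⟩, if_pos h2]; ring
            · rw [if_neg (by tauto), if_neg h2, mul_zero]
          rw [Finset.sum_congr rfl fun r2 _ => st r2, Finset.sum_ite_eq']
          simp
        · rw [if_neg h]
          refine Finset.sum_eq_zero fun r2 _ => by rw [if_neg (by tauto), mul_zero]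
    rw [Finset.sum_congr rfl fun r1 _ => inner r1, Finset.sum_add_distrib,
      sum_val_pick, sum_val_pick]
    by_cases h : (q1 : ℕ) + 1 < k
    · have hz2 : vZmat n k v Z p (⟨(q1:ℕ)+1, h⟩, j2) = Z p (⟨(q1:ℕ), by omega⟩, j2) := by
        dsimp only [vZmat, Matrix.of_apply]
        rw [if_neg (by omega), dif_pos (by omega)]
        congr 2
      rw [dif_pos h, dif_pos h, hz2, C_add, C_neg, dif_pos hk0]
    · rw [dif_neg h, dif_neg h, add_zero, add_zero, dif_pos hk0]

lemma coeffL {k : ℕ} (a b : Fin k → ℝ) (d : ℕ) :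
    (∑ q : Fin k, (X * C (a q) + C (b q)) * X ^ (k - 1 - (q : ℕ))).coeff d =
      (if h : 1 ≤ d ∧ d ≤ k then a ⟨k - d, by omega⟩ else 0) +
      (if h : d < k then b ⟨k - 1 - d, by omega⟩ else 0) := by
  rw [Polynomial.finset_sum_coeff]
  have step : ∀ q : Fin k, ((X * C (a q) + C (b q)) * X ^ (k - 1 - (q : ℕ))).coeff d =
      (if (q : ℕ) = k - d ∧ 1 ≤ d ∧ d ≤ k then a q else 0) +
      (if (q : ℕ) = k - 1 - d ∧ d < k then b q else 0) := by
    intro q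
    have hq := q.isLt
    rw [add_mul, coeff_add]
    rw [show X * C (a q) * X ^ (k - 1 - (q:ℕ)) = C (a q) * X ^ (k - 1 - (q:ℕ) + 1) by ring]
    rw [coeff_C_mul, coeff_C_mul, coeff_X_pow, coeff_X_pow]
    congr 1
    · by_cases h : d = k - 1 - (q:ℕ) + 1
      · rw [if_pos h, if_pos (by omega), mul_one]
      · rw [if_neg h, if_neg (by omega), mul_zero]
    · by_cases h : d = k - 1 - (q:ℕ)
      · rw [if_pos h, if_pos (by omega), mul_one]
      · rw [if_neg h, if_neg (by omega), mul_zero]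
  rw [Finset.sum_congr rfl (fun q _ => step q), Finset.sum_add_distrib]
  congr 1
  · by_cases h : 1 ≤ d ∧ d ≤ k
    · rw [dif_pos h]
      rw [show (∑ q : Fin k, if (q:ℕ) = k - d ∧ 1 ≤ d ∧ d ≤ k then a q else 0) =
        ∑ q : Fin k, if (q:ℕ) = k - d then a q else 0 from
        Finset.sum_congr rfl fun q _ => by simp [h]]
      rw [sum_val_pick, dif_pos (by omega)]
    · rw [dif_neg h]
      refine Finset.sum_eq_zero fun q _ => if_neg (by tauto)
  · by_cases h : d < k
    · rw [dif_pos h]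
      rw [show (∑ q : Fin k, if (q:ℕ) = k - 1 - d ∧ d < k then b q else 0) =
        ∑ q : Fin k, if (q:ℕ) = k - 1 - d then b q else 0 from
        Finset.sum_congr rfl fun q _ => by simp [h]]
      rw [sum_val_pick, dif_pos (by omega)]
    · rw [dif_neg h]
      refine Finset.sum_eq_zero fun q _ => if_neg (by tauto)

lemma coeffR (c : ℕ → ℝ) (k d : ℕ) :
    (∑ t ∈ Finset.range (k + 1), X ^ t * C (c t)).coeff d =
      if d < k + 1 then c d else 0 := by
  rw [Polynomial.finset_sum_coeff]
  have step : ∀ t, (X ^ t * C (c t)).coeff d = if t = d then c t else 0 := by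
    intro t
    rw [mul_comm, coeff_C_mul, coeff_X_pow]
    by_cases h : d = t
    · rw [if_pos h, if_pos h.symm, mul_one]
    · rw [if_neg h, if_neg (Ne.symm h), mul_zero]
  rw [Finset.sum_congr rfl (fun t _ => step t), Finset.sum_ite_eq' (Finset.range (k+1)) d c]
  simp [Nat.lt_succ_iff]

lemma entryL (n k : ℕ) (Lx Ly : Matrix (Fin k × Fin n) (Fin k × Fin n) ℝ)
    (p : Fin k × Fin n) (q0 : Fin 1) (j2 : Fin n) :
    (pencilM Lx Ly * LamI n k) p (q0, j2) =
      ∑ x1 : Fin k, (X * C (Lx p (x1, j2)) + C (Ly p (x1, j2))) * X ^ (k - 1 - (x1 : ℕ)) := by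
  rw [Matrix.mul_apply, Fintype.sum_prod_type]
  refine Finset.sum_congr rfl fun x1 _ => ?_
  simp [pencilM, LamI, mul_ite, Finset.sum_ite_eq]

lemma idxc {k n : ℕ} {α : Type*} (f : Fin k × Fin n → α) {a b : ℕ}
    (ha : a < k) (hb : b < k) (hab : a = b) (j2 : Fin n) :
    f (⟨a, ha⟩, j2) = f (⟨b, hb⟩, j2) := by subst hab; rfl

lemma hypIff (n k : ℕ) (hk : 2 ≤ k) (Pc : ℕ → Matrix (Fin n) (Fin n) ℝ)
    (v : Fin k → ℝ) (Lx Ly : Matrix (Fin k × Fin n) (Fin k × Fin n) ℝ) :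
    (pencilM Lx Ly * LamI n k =
        Matrix.of (fun p q => C (v p.1) * polyOf n n k Pc p.2 q.2)) ↔
    ∀ (p : Fin k × Fin n) (j2 : Fin n),
      (Lx p (⟨0, by omega⟩, j2) = v p.1 * Pc k p.2 j2) ∧
      (∀ (j : ℕ) (hj : j + 1 < k),
        Lx p (⟨j + 1, hj⟩, j2) + Ly p (⟨j, by omega⟩, j2) = v p.1 * Pc (k - 1 - j) p.2 j2) ∧
      (Ly p (⟨k - 1, by omega⟩, j2) = v p.1 * Pc 0 p.2 j2) := by
  have hk0 : 0 < k := by omega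
  have coeq : ∀ (p : Fin k × Fin n) (j2 : Fin n) (d : ℕ),
      ((pencilM Lx Ly * LamI n k) p (0, j2)).coeff d =
      (if h : 1 ≤ d ∧ d ≤ k then Lx p (⟨k - d, by omega⟩, j2) else 0) +
      (if h : d < k then Ly p (⟨k - 1 - d, by omega⟩, j2) else 0) := by
    intro p j2 d
    rw [entryL n k Lx Ly p 0 j2, coeffL]
  have rcoeq : ∀ (p : Fin k × Fin n) (j2 : Fin n) (d : ℕ),
      ((Matrix.of (fun p q => C (v p.1) * polyOf n n k Pc p.2 q.2) :
          Matrix (Fin k × Fin n) (Fin 1 × Fin n) (Polynomial ℝ)) p (0, j2)).coeff d =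
      v p.1 * (if d < k + 1 then Pc d p.2 j2 else 0) := by
    intro p j2 d
    simp only [Matrix.of_apply, polyOf, coeff_C_mul]
    rw [coeffR]
  constructor
  · intro h p j2
    have hc : ∀ d : ℕ,
        ((if h : 1 ≤ d ∧ d ≤ k then Lx p (⟨k - d, by omega⟩, j2) else 0) +
         (if h : d < k then Ly p (⟨k - 1 - d, by omega⟩, j2) else 0)) =
        v p.1 * (if d < k + 1 then Pc d p.2 j2 else 0) := by
      intro d
      rw [← coeq p j2 d, ← rcoeq p j2 d, h]
    refine ⟨?_, ?_, ?_⟩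
    · have H := hc k
      rw [dif_pos (⟨by omega, le_rfl⟩ : 1 ≤ k ∧ k ≤ k), dif_neg (by omega : ¬ k < k),
        add_zero, if_pos (by omega : k < k + 1)] at H
      simp only [Nat.sub_self] at H
      exact H
    · intro j hj
      have H := hc (k - 1 - j)
      rw [dif_pos (by omega : 1 ≤ k - 1 - j ∧ k - 1 - j ≤ k),
        dif_pos (by omega : k - 1 - j < k), if_pos (by omega : k - 1 - j < k + 1)] at H
      calc Lx p (⟨j + 1, hj⟩, j2) + Ly p (⟨j, by omega⟩, j2)
          = Lx p (⟨k - (k - 1 - j), by omega⟩, j2) +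
            Ly p (⟨k - 1 - (k - 1 - j), by omega⟩, j2) := by
            rw [idxc (fun x => Lx p x) hj (by omega) (show j + 1 = k - (k - 1 - j) by omega) j2,
              idxc (fun x => Ly p x) (by omega) (by omega)
                (show j = k - 1 - (k - 1 - j) by omega) j2]
        _ = v p.1 * Pc (k - 1 - j) p.2 j2 := H
    · have H := hc 0
      rw [dif_neg (by omega : ¬ (1 ≤ 0 ∧ 0 ≤ k)), dif_pos hk0, zero_add,
        if_pos (by omega : 0 < k + 1)] at H
      exact H
  · intro hR
    apply Matrix.ext
    rintro p ⟨q0, j2⟩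
    apply Polynomial.ext
    intro d
    obtain rfl : q0 = 0 := Subsingleton.elim q0 0
    rw [coeq p j2 d, rcoeq p j2 d]
    by_cases hd1 : k < d
    · rw [dif_neg (by omega), dif_neg (by omega), if_neg (by omega), add_zero, mul_zero]
    · rw [if_pos (by omega)]
      by_cases hd2 : d = k
      · rw [dif_pos (by omega : 1 ≤ d ∧ d ≤ k), dif_neg (by omega : ¬ d < k), add_zero]
        calc Lx p (⟨k - d, by omega⟩, j2)
            = Lx p (⟨0, hk0⟩, j2) := idxc (fun x => Lx p x) (by omega) hk0 (by omega) j2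
          _ = v p.1 * Pc k p.2 j2 := (hR p j2).1
          _ = v p.1 * Pc d p.2 j2 := by rw [hd2]
      · by_cases hd3 : d = 0
        · subst hd3
          rw [dif_neg (by omega), dif_pos hk0, zero_add]
          exact (hR p j2).2.2
        · rw [dif_pos (by omega : 1 ≤ d ∧ d ≤ k), dif_pos (by omega : d < k)]
          have H := (hR p j2).2.1 (k - 1 - d) (by omega)
          have e2 : k - 1 - (k - 1 - d) = d := by omega
          rw [e2] at H
          calc Lx p (⟨k - d, by omega⟩, j2) + Ly p (⟨k - 1 - d, by omega⟩, j2)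
              = Lx p (⟨(k - 1 - d) + 1, by omega⟩, j2) + Ly p (⟨k - 1 - d, by omega⟩, j2) := by
                rw [idxc (fun x => Lx p x) (by omega) (by omega)
                  (show k - d = (k - 1 - d) + 1 by omega) j2]
            _ = v p.1 * Pc d p.2 j2 := H

lemma linEq (a b c d : ℝ) : X * C a + C b = X * C c + C d ↔ a = c ∧ b = d := by
  constructor
  · intro h
    constructor
    · have h1 := congrArg (fun p => Polynomial.coeff p 1) h
      simpa using h1
    · have h0 := congrArg (fun p => Polynomial.coeff p 0) h
      simpa using h0
  · rintro ⟨rfl, rfl⟩; rfl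

lemma concIff (n k : ℕ) (hk : 2 ≤ k) (Pc : ℕ → Matrix (Fin n) (Fin n) ℝ)
    (v : Fin k → ℝ) (Z : Matrix (Fin k × Fin n) (Fin (k - 1) × Fin n) ℝ)
    (Lx Ly : Matrix (Fin k × Fin n) (Fin k × Fin n) ℝ) :
    (pencilM Lx Ly = (vZmat n k v Z).map C * FrobP n k Pc) ↔
    ∀ (p : Fin k × Fin n) (q1 : Fin k) (j2 : Fin n),
      (Lx p (q1, j2) = if h : (q1 : ℕ) = 0 then v p.1 * Pc k p.2 j2
          else Z p (⟨(q1 : ℕ) - 1, by have := q1.isLt; omega⟩, j2)) ∧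
      (Ly p (q1, j2) = v p.1 * Pc (k - 1 - (q1 : ℕ)) p.2 j2 +
          (if h : (q1 : ℕ) + 1 < k then -(Z p (⟨(q1 : ℕ), by omega⟩, j2)) else 0)) := by
  constructor
  · intro h p q1 j2
    have h1 : pencilM Lx Ly p (q1, j2) = ((vZmat n k v Z).map C * FrobP n k Pc) p (q1, j2) := by
      rw [h]
    rw [entryR n k hk Pc v Z p q1 j2] at h1
    exact (linEq _ _ _ _).1 h1
  · intro h
    apply Matrix.ext
    rintro p ⟨q1, j2⟩
    rw [entryR n k hk Pc v Z p q1 j2]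
    obtain ⟨e1, e2⟩ := h p q1 j2
    show X * C (Lx p (q1, j2)) + C (Ly p (q1, j2)) = _
    rw [e1, e2]

theorem stmt17 (n k : ℕ) (hk : 2 ≤ k)
    (Pc : ℕ → Matrix (Fin n) (Fin n) ℝ) (hdeg : Pc k ≠ 0)
    (v : Fin k → ℝ)
    (Lx Ly : Matrix (Fin k × Fin n) (Fin k × Fin n) ℝ) :
    pencilM Lx Ly * LamI n k =
        Matrix.of (fun p q => C (v p.1) * polyOf n n k Pc p.2 q.2) ↔
    ∃ Z : Matrix (Fin k × Fin n) (Fin (k - 1) × Fin n) ℝ,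
      pencilM Lx Ly = (vZmat n k v Z).map C * FrobP n k Pc := by
  have hk0 : 0 < k := by omega
  rw [hypIff n k hk Pc v Lx Ly]
  constructor
  · intro hR
    refine ⟨fun p jj => Lx p (⟨(jj.1 : ℕ) + 1, by have := jj.1.isLt; omega⟩, jj.2),
      (concIff n k hk Pc v _ Lx Ly).2 ?_⟩
    intro p q1 j2
    constructor
    · by_cases hq : (q1 : ℕ) = 0
      · rw [dif_pos hq]
        have H := (hR p j2).1
        rw [show q1 = (⟨0, hk0⟩ : Fin k) from Fin.ext hq]
        exact H
      · rw [dif_neg hq]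
        dsimp only
        exact congrArg (fun x => Lx p (x, j2)) (Fin.ext (show (q1 : ℕ) = (q1 : ℕ) - 1 + 1 by omega))
    · by_cases hq : (q1 : ℕ) + 1 < k
      · rw [dif_pos hq]
        dsimp only
        have H := (hR p j2).2.1 (q1 : ℕ) hq
        have e : Ly p (⟨(q1 : ℕ), by omega⟩, j2) = Ly p (q1, j2) :=
          congrArg (fun x => Ly p (x, j2)) (Fin.ext rfl)
        rw [e] at H
        linarith [H]
      · rw [dif_neg hq, add_zero]
        have H := (hR p j2).2.2
        have e2 : Ly p (q1, j2) = Ly p (⟨k - 1, by omega⟩, j2) :=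
          congrArg (fun x => Ly p (x, j2)) (Fin.ext (show (q1 : ℕ) = k - 1 by
            have := q1.isLt; omega))
        rw [show k - 1 - (q1 : ℕ) = 0 by have := q1.isLt; omega]
        exact e2.trans H
  · rintro ⟨Z, hZ⟩
    have hC := (concIff n k hk Pc v Z Lx Ly).1 hZ
    intro p j2
    refine ⟨?_, ?_, ?_⟩
    · have h1 := (hC p ⟨0, hk0⟩ j2).1
      rw [dif_pos rfl] at h1
      exact h1
    · intro j hj
      have h1 := (hC p ⟨j + 1, hj⟩ j2).1
      rw [dif_neg (show ¬ ((⟨j + 1, hj⟩ : Fin k) : ℕ) = 0 by show ¬ (j + 1 = 0); omega)] at h1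
      have h2 := (hC p ⟨j, by omega⟩ j2).2
      rw [dif_pos (show ((⟨j, by omega⟩ : Fin k) : ℕ) + 1 < k from hj)] at h2
      rw [h1, h2]
      have ez : Z p (⟨(j + 1 : ℕ) - 1, by omega⟩, j2) = Z p (⟨j, by omega⟩, j2) := by
        exact congrArg (fun x => Z p (x, j2)) (Fin.ext rfl)
      rw [ez]
      ring
    · have h3 := (hC p ⟨k - 1, by omega⟩ j2).2
      rw [dif_neg (show ¬ (((⟨k - 1, by omega⟩ : Fin k) : ℕ) + 1 < k) by show ¬ (k - 1 + 1 < k); omega), add_zero] at h3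
      rw [h3, show k - 1 - ((⟨k - 1, by omega⟩ : Fin k) : ℕ) = 0 by show k - 1 - (k - 1) = 0; omega]
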